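/- For all complex numbers u, v, with f(z) = z·ln|z|² (i.e., f(z) = 2z·ln|z|, f(0)=0), the imaginary part of (f(u) - f(v))·conj(u - v) satisfies |Im[(f(u) - f(v))·conj(u - v)]| ≤ |u - v|². -/

import Mathlib

set_option maxHeartbeats 1000000

lemma aux_two_log (x : ℝ) (hx : 1 ≤ x) : 2 * Real.log x ≤ x - x⁻¹ := by
  have hmono : MonotoneOn (fun y : ℝ => y - y⁻¹ - 2 * Real.log y) (Set.Ici 1) := by
    apply monotoneOn_of_deriv_nonneg (convex_Ici 1)
    · apply ContinuousOn.sub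
      apply ContinuousOn.sub continuousOn_id
      · exact ContinuousOn.inv₀ continuousOn_id (fun y hy => by
          have : (1:ℝ) ≤ y := hy
          linarith)
      · exact ContinuousOn.mul continuousOn_const (Real.continuousOn_log.mono (by
          intro y hy
          have : (1:ℝ) ≤ y := hy
          simp; linarith))
    · intro y hy
      rw [interior_Ici] at hy
      have hy1 : (1:ℝ) < y := hy
      have hy0 : y ≠ 0 := by linarith
      exact (((differentiableAt_fun_id).sub (differentiableAt_inv hy0)).sub
        ((Real.differentiableAt_log hy0).const_mul 2)).differentiableWithinAt
    · intro y hy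
      rw [interior_Ici] at hy
      have hy1 : (1:ℝ) < y := hy
      have hy0 : y ≠ 0 := by linarith
      have hd : HasDerivAt (fun y : ℝ => y - y⁻¹ - 2 * Real.log y)
          (1 - (-(y^2)⁻¹) - 2 * (1/y)) y :=
        ((hasDerivAt_id y).sub (hasDerivAt_inv hy0)).sub
          ((Real.hasDerivAt_log hy0).const_mul 2 |>.congr_deriv (by ring))
      rw [hd.deriv]
      have h2 : (0:ℝ) < y^2 := by positivity
      have h3 : (y^2)⁻¹ = (1/y)^2 := by field_simp
      nlinarith [sq_nonneg (1 - 1/y)]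
  have h1 := hmono (Set.self_mem_Ici) hx hx
  simp [Real.log_one] at h1
  linarith

lemma key_ineq (r s c m : ℝ) (hr : 0 < r) (hs : 0 < s) (hrs : r ≤ s)
    (hcm : c^2 + m^2 = (r*s)^2) :
    (Real.log (s^2) - Real.log (r^2)) * |m| ≤ r^2 + s^2 - 2*c := by
  set x := Real.sqrt (s/r) with hxdef
  have hx1 : 1 ≤ x := by
    rw [hxdef]
    rw [show (1:ℝ) = Real.sqrt 1 by simp]
    exact Real.sqrt_le_sqrt ((one_le_div hr).mpr hrs)
  have hxpos : 0 < x := lt_of_lt_of_le one_pos hx1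
  have hxne : x ≠ 0 := ne_of_gt hxpos
  have hx2 : x^2 = s/r := Real.sq_sqrt (by positivity)
  have hx2' : (x⁻¹)^2 = r/s := by
    rw [inv_pow, hx2, inv_div]
  set K := Real.log (s^2) - Real.log (r^2) with hKdef
  have hlog : K = 2 * (2 * Real.log x) := by
    have e2 : Real.log s - Real.log r = 2 * Real.log x := by
      rw [← Real.log_div (ne_of_gt hs) (ne_of_gt hr), ← hx2, Real.log_pow]
      push_cast; ring
    rw [hKdef, Real.log_pow, Real.log_pow]
    push_cast; linarith
  have h2 := aux_two_log x hx1
  clear_value x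
  clear_value K
  have hK0 : 0 ≤ K := by
    rw [hlog]
    have : 0 ≤ Real.log x := Real.log_nonneg hx1
    linarith
  have hKle : K ≤ 2*(x - x⁻¹) := by rw [hlog]; linarith
  have hxi : 0 ≤ x - x⁻¹ := by
    have : x⁻¹ ≤ 1 := by
      rw [inv_le_one_iff₀]; right; exact hx1
    linarith
  have hrs0 : 0 < r*s := mul_pos hr hs
  have h4 : (x - x⁻¹)^2 * (r*s) = (s-r)^2 := by
    have hxx : x * x⁻¹ = 1 := mul_inv_cancel₀ hxne
    have e1 : (x - x⁻¹)^2 = s/r - 2 + r/s := by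
      have e0 : (x - x⁻¹)^2 = x^2 - 2*(x*x⁻¹) + (x⁻¹)^2 := by ring
      rw [e0, hxx, hx2, hx2']; ring
    rw [e1]; field_simp; ring
  have hKsq : K^2 * (r*s) ≤ 4*(s-r)^2 := by
    have h3 : K^2 ≤ 4*(x - x⁻¹)^2 := by nlinarith
    have h3' := mul_le_mul_of_nonneg_right h3 hrs0.le
    have h4' : 4*(x - x⁻¹)^2 * (r*s) = 4*(s-r)^2 := by rw [mul_assoc, h4]
    linarith [h3', h4']
  -- final stage
  set M := |m| with hMdef
  have hM0 : 0 ≤ M := abs_nonneg m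
  have hM2 : M^2 = m^2 := sq_abs m
  have hc : c ≤ r*s := by nlinarith [sq_nonneg m]
  have hD0 : 0 ≤ r^2 + s^2 - 2*c := by nlinarith [sq_nonneg (r-s)]
  have hm2eq : m^2 = (r*s)^2 - c^2 := by linarith
  have hsq : (K*M)^2 * (r*s) ≤ (r^2 + s^2 - 2*c)^2 * (r*s) := by
    have h5 : (K^2 * (r*s)) * M^2 ≤ (4*(s-r)^2) * M^2 :=
      mul_le_mul_of_nonneg_right hKsq (sq_nonneg M)
    have h6 : 4*(s-r)^2 * m^2 ≤ (r^2 + s^2 - 2*c)^2 * (r*s) := by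
      rw [hm2eq]
      linarith [mul_nonneg hrs0.le (sq_nonneg ((s-r)^2 - 2*(r*s - c))),
        mul_nonneg (sq_nonneg (s-r)) (sq_nonneg (r*s - c))]
    calc (K*M)^2 * (r*s) = (K^2 * (r*s)) * M^2 := by ring
    _ ≤ 4*(s-r)^2 * M^2 := h5
    _ = 4*(s-r)^2 * m^2 := by rw [hM2]
    _ ≤ (r^2 + s^2 - 2*c)^2 * (r*s) := h6
  have hsq2 : (K*M)^2 ≤ (r^2 + s^2 - 2*c)^2 := le_of_mul_le_mul_right hsq hrs0
  have hfin := Real.sqrt_le_sqrt hsq2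
  rwa [Real.sqrt_sq (mul_nonneg hK0 hM0), Real.sqrt_sq hD0] at hfin

noncomputable def f (z : ℂ) : ℂ := z * Real.log (‖z‖ ^ 2)

theorem stmt_4 (u v : ℂ) :
    |Complex.im ((f u - f v) * (starRingEnd ℂ) (u - v))| ≤ ‖u - v‖ ^ 2 := by
  have hid : ((f u - f v) * (starRingEnd ℂ) (u - v)).im
      = (Real.log (‖v‖ ^ 2) - Real.log (‖u‖ ^ 2))
        * (u * (starRingEnd ℂ) v).im := by
    simp only [f, map_sub, Complex.mul_im, Complex.mul_re, Complex.sub_re, Complex.sub_im,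
      Complex.conj_re, Complex.conj_im, Complex.ofReal_re, Complex.ofReal_im]
    ring
  rw [hid]
  by_cases hu : u = 0
  · simp [hu]
  by_cases hv : v = 0
  · simp [hv]
  set r := ‖u‖ with hrdef
  set s := ‖v‖ with hsdef
  have hr : 0 < r := by simpa [hrdef] using norm_pos_iff.mpr hu
  have hs : 0 < s := by simpa [hsdef] using norm_pos_iff.mpr hv
  set c := (u * (starRingEnd ℂ) v).re with hcdef
  set m := (u * (starRingEnd ℂ) v).im with hmdef
  have hcm : c^2 + m^2 = (r*s)^2 := by
    have h1 : ‖u * (starRingEnd ℂ) v‖^2 = (r*s)^2 := by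
      rw [norm_mul, Complex.norm_conj]
    rw [Complex.sq_norm, Complex.normSq_apply] at h1
    rw [← h1, hcdef, hmdef]; ring
  have habs : ‖u - v‖^2 = r^2 + s^2 - 2*c := by
    simp only [hrdef, hsdef, hcdef, Complex.sq_norm, Complex.normSq_apply,
      Complex.sub_re, Complex.sub_im, Complex.mul_re, Complex.conj_re, Complex.conj_im]
    ring
  rw [abs_mul, habs]
  rcases le_total r s with h | h
  · have hA : |Real.log (s^2) - Real.log (r^2)| = Real.log (s^2) - Real.log (r^2) := by
      apply abs_of_nonneg
      have := Real.log_le_log (by positivity) (by nlinarith : r^2 ≤ s^2)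
      linarith
    rw [hA]
    exact key_ineq r s c m hr hs h hcm
  · have hA : |Real.log (s^2) - Real.log (r^2)| = Real.log (r^2) - Real.log (s^2) := by
      rw [abs_sub_comm]
      apply abs_of_nonneg
      have := Real.log_le_log (by positivity) (by nlinarith : s^2 ≤ r^2)
      linarith
    rw [hA]
    have := key_ineq s r c m hs hr h (by rw [hcm]; ring)
    linarith
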